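/- For every integer n ≥ 1, the kernel of the ℂ-algebra homomorphism φ : ℂ[Z₁, Z₂, W] → ℂ[x₁, y₁, …, y_n, x_n] determined by Z₁ ↦ x_n^{n+1} ∏_{j=1}^{n} y_j^{j}, Z₂ ↦ x₁^{n+1} ∏_{j=1}^{n} y_j^{n+1−j}, W ↦ x₁ x_n ∏_{j=1}^{n} y_j is the principal ideal generated by Z₁Z₂ − W^{n+1}. Consequently, the invariant ring of the torus action is isomorphic to ℂ[Z₁, Z₂, W]/(Z₁Z₂ − W^{n+1}), the coordinate ring of the A_n singularity {xy = z^{n+1}}. -/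

import Mathlib

open MvPolynomial

/-- The subalgebra of an `Fin n`-multigraded polynomial ring consisting of the polynomials
all of whose monomials have weight zero (the ring of invariants of the torus action
with weights `w`). -/
noncomputable def invariants {m n : ℕ} (w : Fin m → Fin n → ℤ) :
    Subalgebra ℂ (MvPolynomial (Fin m) ℂ) where
  carrier := {p | ∀ d ∈ p.support, ∀ i : Fin n, ∑ v, (d v : ℤ) * w v i = 0}
  zero_mem' := by
    intro d hd i
    simp at hd
  one_mem' := by
    intro d hd i
    have hd' : d = 0 := by
      by_contra h
      have := MvPolynomial.mem_support_iff.mp hd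
      rw [show (1 : MvPolynomial (Fin m) ℂ) = C 1 from (map_one C).symm,
        MvPolynomial.coeff_C, if_neg (Ne.symm h)] at this
      exact this rfl
    subst hd'
    simp
  add_mem' := by
    intro p q hp hq d hd i
    rcases Finset.mem_union.mp (MvPolynomial.support_add hd) with h | h
    · exact hp d h i
    · exact hq d h i
  mul_mem' := by
    intro p q hp hq d hd i
    obtain ⟨a, ha, b, hb, rfl⟩ := Finset.mem_add.mp (MvPolynomial.support_mul p q hd)
    have key : ∀ v : Fin m, (((a + b) v : ℤ)) * w v i
        = (a v : ℤ) * w v i + (b v : ℤ) * w v i := by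
      intro v
      rw [Finsupp.add_apply]
      push_cast
      ring
    rw [Finset.sum_congr rfl fun v _ => key v, Finset.sum_add_distrib,
      hp a ha i, hq b hb i, add_zero]
  algebraMap_mem' := by
    intro r d hd i
    have hd' : d = 0 := by
      by_contra h
      have := MvPolynomial.mem_support_iff.mp hd
      rw [MvPolynomial.algebraMap_eq, MvPolynomial.coeff_C, if_neg (Ne.symm h)] at this
      exact this rfl
    subst hd'
    simp

/-- Weights of the torus action for the `A_n` singularity: the variables of
`ℂ[x₁, y₁, …, y_n, x_n]` are indexed by `Fin (n+2)` with `0 ↦ x₁`, `j ↦ y_j`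
for `1 ≤ j ≤ n` and `n+1 ↦ x_n`; the coordinate `i : Fin n` corresponds to the
basis vector `e_{i+1}` of `ℤⁿ`. -/
def wA (n : ℕ) (v : Fin (n + 2)) (i : Fin n) : ℤ :=
  if (v : ℕ) = 0 then (if (i : ℕ) = 0 then 1 else 0)
  else if (v : ℕ) = n + 1 then (if (i : ℕ) = n - 1 then 1 else 0)
  else (if (i : ℕ) + 1 = (v : ℕ) - 1 then 1 else 0)
    + (if (i : ℕ) + 1 = (v : ℕ) then -2 else 0)
    + (if (i : ℕ) + 1 = (v : ℕ) + 1 then 1 else 0)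

/-- The variable of index `a` in `ℂ[x₁, y₁, …, y_n, x_n]` (indices as in `wA`). -/
noncomputable def vA (n : ℕ) (a : ℕ) : MvPolynomial (Fin (n + 2)) ℂ :=
  MvPolynomial.X ⟨a % (n + 2), Nat.mod_lt a (by omega)⟩

noncomputable def Dfun (n a b c : ℕ) : Fin (n+2) →₀ ℕ :=
  Finsupp.equivFunOnFinite.symm fun v => a * v + b * (n + 1 - v) + c

lemma Dfun_apply (n a b c : ℕ) (v : Fin (n+2)) :
    Dfun n a b c v = a * v + b * (n + 1 - v) + c := rfl

lemma prod_monomial {ι σ : Type*} (F : Finset ι) (s : ι → σ →₀ ℕ) :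
    ∏ j ∈ F, (monomial (s j) (1:ℂ)) = monomial (∑ j ∈ F, s j) 1 := by
  classical
  induction F using Finset.induction_on with
  | empty => simp
  | insert a s h ih => simp [Finset.prod_insert h, Finset.sum_insert h, ih, monomial_mul]

lemma vA_pow (n a k : ℕ) :
    vA n a ^ k = monomial (Finsupp.single ⟨a % (n+2), Nat.mod_lt a (by omega)⟩ k) 1 := by
  rw [vA, X_pow_eq_monomial]

lemma sum_single_apply (n : ℕ) (e : ℕ → ℕ) (v : Fin (n+2)) :
    (∑ j ∈ Finset.Icc 1 n, Finsupp.single (⟨j % (n+2), Nat.mod_lt j (by omega)⟩ : Fin (n+2)) (e j)) v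
      = if (v:ℕ) ∈ Finset.Icc 1 n then e v else 0 := by
  rw [Finsupp.finset_sum_apply]
  rw [Finset.sum_congr rfl (fun j hj => ?_), Finset.sum_ite_eq' (Finset.Icc 1 n) (v:ℕ) e]
  have hj' := Finset.mem_Icc.mp hj
  rw [Finsupp.single_apply]
  have : ((⟨j % (n+2), Nat.mod_lt j (by omega)⟩ : Fin (n+2)) = v) ↔ (j = (v:ℕ)) := by
    rw [Fin.ext_iff]
    simp only []
    rw [Nat.mod_eq_of_lt (by omega)]
  simp [this]

lemma g0_eq (n : ℕ) :
    vA n (n + 1) ^ (n + 1) * ∏ j ∈ Finset.Icc 1 n, vA n j ^ j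
      = monomial (Dfun n 1 0 0) 1 := by
  rw [Finset.prod_congr rfl (fun j _ => vA_pow n j j), prod_monomial, vA_pow, monomial_mul,
    one_mul]
  refine congrArg (fun s => (monomial s (1:ℂ))) ?_
  ext v
  rw [Finsupp.add_apply, Finsupp.single_apply, sum_single_apply n (fun j => j) v, Dfun_apply]
  have hv := v.isLt
  have h1 : ((⟨(n+1) % (n+2), Nat.mod_lt _ (by omega)⟩ : Fin (n+2)) = v) ↔ ((n+1) = (v:ℕ)) := by
    rw [Fin.ext_iff]; simp only []; rw [Nat.mod_eq_of_lt (by omega)]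
  simp only [h1, Finset.mem_Icc]
  split_ifs <;> omega

lemma g1_eq (n : ℕ) :
    vA n 0 ^ (n + 1) * ∏ j ∈ Finset.Icc 1 n, vA n j ^ (n + 1 - j)
      = monomial (Dfun n 0 1 0) 1 := by
  rw [Finset.prod_congr rfl (fun j _ => vA_pow n j (n+1-j)), prod_monomial, vA_pow, monomial_mul,
    one_mul]
  refine congrArg (fun s => (monomial s (1:ℂ))) ?_
  ext v
  rw [Finsupp.add_apply, Finsupp.single_apply, sum_single_apply n (fun j => n+1-j) v, Dfun_apply]
  have hv := v.isLt
  have h1 : ((⟨0 % (n+2), Nat.mod_lt _ (by omega)⟩ : Fin (n+2)) = v) ↔ (0 = (v:ℕ)) := by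
    rw [Fin.ext_iff]; simp only []; rw [Nat.mod_eq_of_lt (by omega)]
  simp only [h1, Finset.mem_Icc]
  split_ifs <;> omega

lemma g2_eq (n : ℕ) :
    vA n 0 * vA n (n + 1) * ∏ j ∈ Finset.Icc 1 n, vA n j
      = monomial (Dfun n 0 0 1) 1 := by
  have e0 : vA n 0 = vA n 0 ^ 1 := (pow_one _).symm
  have e1 : vA n (n+1) = vA n (n+1) ^ 1 := (pow_one _).symm
  rw [e0, e1, Finset.prod_congr rfl (fun j _ => (pow_one (vA n j)).symm),
    Finset.prod_congr rfl (fun j _ => vA_pow n j 1), prod_monomial, vA_pow, vA_pow,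
    monomial_mul, monomial_mul, one_mul, one_mul]
  refine congrArg (fun s => (monomial s (1:ℂ))) ?_
  ext v
  rw [Finsupp.add_apply, Finsupp.add_apply, Finsupp.single_apply, Finsupp.single_apply,
    sum_single_apply n (fun _ => 1) v, Dfun_apply]
  have hv := v.isLt
  have h1 : ((⟨0 % (n+2), Nat.mod_lt _ (by omega)⟩ : Fin (n+2)) = v) ↔ (0 = (v:ℕ)) := by
    rw [Fin.ext_iff]; simp only []; rw [Nat.mod_eq_of_lt (by omega)]
  have h2 : ((⟨(n+1) % (n+2), Nat.mod_lt _ (by omega)⟩ : Fin (n+2)) = v) ↔ ((n+1) = (v:ℕ)) := by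
    rw [Fin.ext_iff]; simp only []; rw [Nat.mod_eq_of_lt (by omega)]
  simp only [h1, h2, Finset.mem_Icc]
  split_ifs <;> omega

noncomputable def Gv (n : ℕ) : Fin 3 → MvPolynomial (Fin (n + 2)) ℂ :=
  ![vA n (n + 1) ^ (n + 1) * ∏ j ∈ Finset.Icc 1 n, vA n j ^ j,
    vA n 0 ^ (n + 1) * ∏ j ∈ Finset.Icc 1 n, vA n j ^ (n + 1 - j),
    vA n 0 * vA n (n + 1) * ∏ j ∈ Finset.Icc 1 n, vA n j]

lemma Dfun_smul_add (n : ℕ) (a b c : ℕ) :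
    (a • Dfun n 1 0 0 + b • Dfun n 0 1 0 + c • Dfun n 0 0 1) = Dfun n a b c := by
  ext v
  simp only [Finsupp.add_apply, Finsupp.smul_apply, Dfun_apply, smul_eq_mul]
  ring

lemma aeval_Gv_monomial (n : ℕ) (d : Fin 3 →₀ ℕ) (r : ℂ) :
    MvPolynomial.aeval (Gv n) (monomial d r)
      = monomial (Dfun n (d 0) (d 1) (d 2)) r := by
  rw [aeval_monomial, Finsupp.prod_fintype _ _ (fun i => pow_zero _), Fin.prod_univ_three]
  have h0 : Gv n 0 = monomial (Dfun n 1 0 0) 1 := g0_eq n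
  have h1 : Gv n 1 = monomial (Dfun n 0 1 0) 1 := g1_eq n
  have h2 : Gv n 2 = monomial (Dfun n 0 0 1) 1 := g2_eq n
  rw [h0, h1, h2, monomial_pow, monomial_pow, monomial_pow, monomial_mul, monomial_mul,
    algebraMap_eq, one_pow, one_pow, one_pow, one_mul, one_mul, C_mul_monomial, mul_one,
    Dfun_smul_add]

lemma wA_eq (n : ℕ) (v : Fin (n+2)) (i : Fin n) :
    wA n v i = (if (v:ℕ) = (i:ℕ) then 1 else 0) - 2 * (if (v:ℕ) = (i:ℕ)+1 then 1 else 0)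
      + (if (v:ℕ) = (i:ℕ)+2 then 1 else 0) := by
  have hv := v.isLt
  have hi := i.isLt
  unfold wA
  split_ifs <;> omega

lemma sum_pick (n : ℕ) (d : Fin (n+2) →₀ ℕ) (k : ℕ) (hk : k < n+2) :
    ∑ v : Fin (n+2), (if (v:ℕ) = k then (d v : ℤ) else 0) = d ⟨k, hk⟩ := by
  rw [Finset.sum_eq_single (⟨k, hk⟩ : Fin (n+2))]
  · simp
  · intro v _ hv
    rw [if_neg]
    intro h; exact hv (Fin.ext h)
  · intro h; exact absurd (Finset.mem_univ _) h

lemma weight_sum (n : ℕ) (d : Fin (n+2) →₀ ℕ) (i : Fin n) :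
    ∑ v, (d v : ℤ) * wA n v i
      = (d ⟨(i:ℕ), by omega⟩ : ℤ) - 2 * (d ⟨(i:ℕ)+1, by omega⟩ : ℤ)
        + (d ⟨(i:ℕ)+2, by omega⟩ : ℤ) := by
  have : ∀ v : Fin (n+2), (d v : ℤ) * wA n v i
      = (if (v:ℕ) = (i:ℕ) then (d v : ℤ) else 0)
        - 2 * (if (v:ℕ) = (i:ℕ)+1 then (d v : ℤ) else 0)
        + (if (v:ℕ) = (i:ℕ)+2 then (d v : ℤ) else 0) := by
    intro v
    rw [wA_eq]
    split_ifs <;> ring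
  rw [Finset.sum_congr rfl (fun v _ => this v), Finset.sum_add_distrib,
    Finset.sum_sub_distrib, ← Finset.mul_sum, sum_pick n d i (by omega),
    sum_pick n d ((i:ℕ)+1) (by omega), sum_pick n d ((i:ℕ)+2) (by omega)]

lemma Dfun_weight (n : ℕ) (a b c : ℕ) (i : Fin n) :
    ∑ v, ((Dfun n a b c) v : ℤ) * wA n v i = 0 := by
  rw [weight_sum]
  have hi := i.isLt
  simp only [Dfun_apply]
  have e1 : ((n + 1 - (i:ℕ) : ℕ) : ℤ) = (n:ℤ) + 1 - (i:ℕ) := by omega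
  have e2 : ((n + 1 - ((i:ℕ)+1) : ℕ) : ℤ) = (n:ℤ) + 1 - ((i:ℕ)+1) := by omega
  have e3 : ((n + 1 - ((i:ℕ)+2) : ℕ) : ℤ) = (n:ℤ) + 1 - ((i:ℕ)+2) := by omega
  push_cast
  have f1 : ((n - (i:ℕ) :ℕ):ℤ) = (n:ℤ) - (i:ℕ) := by omega
  have f2 : ((n - (1 + (i:ℕ)) :ℕ):ℤ) = (n:ℤ) - 1 - (i:ℕ) := by omega
  have f4 : ((n - ((i:ℕ)+1) :ℕ):ℤ) = (n:ℤ) - 1 - (i:ℕ) := by omega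
  have f5 : ((n + 1 - ((i:ℕ)+2) :ℕ):ℤ) = (n:ℤ) - 1 - (i:ℕ) := by omega
  simp only [e1, e2, e3, f1, f2, f4, f5]
  ring

set_option maxHeartbeats 1000000 in
lemma classify (n : ℕ) (hn : 1 ≤ n) (d : Fin (n+2) →₀ ℕ)
    (h : ∀ i : Fin n, ∑ v, (d v : ℤ) * wA n v i = 0) :
    ∃ a b c : ℕ, d = Dfun n a b c := by
  have hrec : ∀ i : Fin n,
      (d ⟨(i:ℕ), by omega⟩ : ℤ) - 2 * (d ⟨(i:ℕ)+1, by omega⟩ : ℤ)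
        + (d ⟨(i:ℕ)+2, by omega⟩ : ℤ) = 0 := by
    intro i; rw [← weight_sum]; exact h i
  obtain ⟨D0, hD0⟩ : ∃ D0 : ℤ, (d ⟨0, by omega⟩ : ℤ) = D0 := ⟨_, rfl⟩
  obtain ⟨D1, hD1⟩ : ∃ D1 : ℤ, (d ⟨1, by omega⟩ : ℤ) = D1 := ⟨_, rfl⟩
  have key : ∀ k : ℕ, ∀ hk : k ≤ n+1, (d ⟨k, by omega⟩ : ℤ) = D0 + k * (D1 - D0) := by
    intro k
    induction k using Nat.strong_induction_on with
    | _ k ih =>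
      match k with
      | 0 => intro _; rw [hD0]; push_cast; ring
      | 1 => intro _; rw [hD1]; push_cast; ring
      | (m+2) =>
        intro hk
        have h1 := ih m (by omega) (by omega)
        have h2 := ih (m+1) (by omega) (by omega)
        have h3 := hrec ⟨m, by omega⟩
        simp only [] at h3
        push_cast
        push_cast at h1 h2
        linarith [h3, h1, h2]
  by_cases hts : 0 ≤ D1 - D0
  · refine ⟨(D1 - D0).toNat, 0, d ⟨0, by omega⟩, ?_⟩
    ext v
    have hv := v.isLt
    have hkey := key (v:ℕ) (by omega)
    rw [Fin.eta] at hkey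
    have hB : (((D1 - D0).toNat : ℕ) : ℤ) = D1 - D0 := Int.toNat_of_nonneg hts
    rw [Dfun_apply]
    zify [show (v:ℕ) ≤ n + 1 by omega]
    rw [hB, hD0]
    linarith [hkey]
  · refine ⟨0, (D0 - D1).toNat, d ⟨n+1, by omega⟩, ?_⟩
    ext v
    have hv := v.isLt
    have hkey := key (v:ℕ) (by omega)
    rw [Fin.eta] at hkey
    have hvn := key (n+1) (by omega)
    have hB : (((D0 - D1).toNat : ℕ) : ℤ) = D0 - D1 := Int.toNat_of_nonneg (by omega)
    rw [Dfun_apply]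
    zify [show (v:ℕ) ≤ n + 1 by omega]
    rw [hB]
    push_cast at hvn
    linarith [hkey, hvn]

lemma Dfun_inj (n : ℕ) (a b c a' b' c' : ℕ) (h0 : a = 0 ∨ b = 0) (h0' : a' = 0 ∨ b' = 0)
    (hE : Dfun n a b c = Dfun n a' b' c') : a = a' ∧ b = b' ∧ c = c' := by
  have e1 := DFunLike.congr_fun hE (⟨0, by omega⟩ : Fin (n+2))
  have e2 := DFunLike.congr_fun hE (⟨n+1, by omega⟩ : Fin (n+2))
  simp only [Dfun_apply] at e1 e2
  simp only [Nat.mul_zero, Nat.zero_add, Nat.sub_zero, Nat.sub_self, Nat.add_sub_cancel_left] at e1 e2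
  -- e1 : a*0 + b*(n+1) + c = a'*0 + b'*(n+1) + c' (simplified)
  -- e2 : a*(n+1) + b*(n+1-(n+1)) + c = ...
  have hN : 0 < n + 1 := by omega
  obtain ⟨xa, hxa⟩ : ∃ x, a * (n+1) = x := ⟨_, rfl⟩
  obtain ⟨xb, hxb⟩ : ∃ x, b * (n+1) = x := ⟨_, rfl⟩
  obtain ⟨xa', hxa'⟩ : ∃ x, a' * (n+1) = x := ⟨_, rfl⟩
  obtain ⟨xb', hxb'⟩ : ∃ x, b' * (n+1) = x := ⟨_, rfl⟩
  rw [hxb, hxb'] at e1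
  rw [hxa, hxa'] at e2
  have hEq : (a = a' ∧ b = b') → (a = a' ∧ b = b' ∧ c = c') := by
    rintro ⟨rfl, rfl⟩
    refine ⟨rfl, rfl, ?_⟩
    omega
  rcases h0 with rfl | rfl <;> rcases h0' with rfl | rfl
  · apply hEq
    refine ⟨rfl, ?_⟩
    have : xb = xb' := by omega
    rw [← hxb, ← hxb'] at this
    exact Nat.eq_of_mul_eq_mul_right hN this
  · -- a = 0, b' = 0
    have hb0 : xb = 0 ∧ xa' = 0 := by omega
    have hb : b = 0 := by
      rcases Nat.mul_eq_zero.mp (hxb.trans hb0.1) with h | h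
      · exact h
      · omega
    have ha' : a' = 0 := by
      rcases Nat.mul_eq_zero.mp (hxa'.trans hb0.2) with h | h
      · exact h
      · omega
    subst hb ha'
    apply hEq
    exact ⟨rfl, rfl⟩
  · -- b = 0, a' = 0
    have hb0 : xa = 0 ∧ xb' = 0 := by omega
    have ha : a = 0 := by
      rcases Nat.mul_eq_zero.mp (hxa.trans hb0.1) with h | h
      · exact h
      · omega
    have hb' : b' = 0 := by
      rcases Nat.mul_eq_zero.mp (hxb'.trans hb0.2) with h | h
      · exact h
      · omega
    subst ha hb'
    apply hEq
    exact ⟨rfl, rfl⟩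
  · apply hEq
    refine ⟨?_, rfl⟩
    have : xa = xa' := by omega
    rw [← hxa, ← hxa'] at this
    exact Nat.eq_of_mul_eq_mul_right hN this

lemma pow_reduce {R : Type*} [CommRing R] (x y z : R) (N : ℕ) (h : x * y = z ^ N)
    (a b c m : ℕ) (hma : m ≤ a) (hmb : m ≤ b) :
    x ^ a * y ^ b * z ^ c = x ^ (a - m) * y ^ (b - m) * z ^ (c + N * m) := by
  obtain ⟨a', rfl⟩ : ∃ a', a = a' + m := ⟨a - m, by omega⟩
  obtain ⟨b', rfl⟩ : ∃ b', b = b' + m := ⟨b - m, by omega⟩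
  have h1 : a' + m - m = a' := by omega
  have h2 : b' + m - m = b' := by omega
  rw [h1, h2]
  calc x ^ (a'+m) * y ^ (b'+m) * z ^ c = x ^ a' * y ^ b' * ((x*y) ^ m * z ^ c) := by
        rw [mul_pow, pow_add, pow_add]; ring
    _ = x ^ a' * y ^ b' * z ^ (c + N * m) := by
        rw [h, ← pow_mul, ← pow_add, Nat.add_comm (N*m) c]

lemma mon3 (d : Fin 3 →₀ ℕ) (r : ℂ) :
    monomial d r = C r * (X 0 ^ d 0 * X 1 ^ d 1 * X 2 ^ d 2) := by
  rw [monomial_eq, Finsupp.prod_fintype _ _ (fun i => pow_zero _), Fin.prod_univ_three]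

noncomputable def red3 (n : ℕ) (d : Fin 3 →₀ ℕ) : Fin 3 →₀ ℕ :=
  Finsupp.equivFunOnFinite.symm ![d 0 - min (d 0) (d 1), d 1 - min (d 0) (d 1),
    d 2 + (n + 1) * min (d 0) (d 1)]

lemma red3_0 (n : ℕ) (d : Fin 3 →₀ ℕ) : red3 n d 0 = d 0 - min (d 0) (d 1) := rfl
lemma red3_1 (n : ℕ) (d : Fin 3 →₀ ℕ) : red3 n d 1 = d 1 - min (d 0) (d 1) := rfl
lemma red3_2 (n : ℕ) (d : Fin 3 →₀ ℕ) : red3 n d 2 = d 2 + (n + 1) * min (d 0) (d 1) := rfl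

lemma red3_reduced (n : ℕ) (d : Fin 3 →₀ ℕ) : red3 n d 0 = 0 ∨ red3 n d 1 = 0 := by
  rw [red3_0, red3_1]; omega

lemma monomial_sub_red_mem (n : ℕ) (d : Fin 3 →₀ ℕ) (r : ℂ)
    (I : Ideal (MvPolynomial (Fin 3) ℂ))
    (hI : I = Ideal.span {X 0 * X 1 - X 2 ^ (n + 1)}) :
    monomial d r - monomial (red3 n d) r ∈ I := by
  rw [← Ideal.Quotient.eq_zero_iff_mem, map_sub, sub_eq_zero]
  have hp : (X 0 * X 1 - X 2 ^ (n+1) : MvPolynomial (Fin 3) ℂ) ∈ I := by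
    rw [hI]; exact Ideal.subset_span rfl
  have hrel : Ideal.Quotient.mk I (X 0) * Ideal.Quotient.mk I (X 1)
      = Ideal.Quotient.mk I (X 2) ^ (n+1) := by
    have := (Ideal.Quotient.eq_zero_iff_mem).mpr hp
    rw [map_sub, map_mul, map_pow, sub_eq_zero] at this
    exact this
  rw [mon3, mon3]
  simp only [map_mul, map_pow]
  rw [red3_0, red3_1, red3_2]
  rw [pow_reduce _ _ _ _ hrel (d 0) (d 1) (d 2) (min (d 0) (d 1)) (by omega) (by omega)]

lemma ker_le_span (n : ℕ) (hn : 1 ≤ n) (f : MvPolynomial (Fin 3) ℂ)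
    (hf : MvPolynomial.aeval (Gv n) f = 0) :
    f ∈ Ideal.span {(X 0 * X 1 - X 2 ^ (n + 1) : MvPolynomial (Fin 3) ℂ)} := by
  set I : Ideal (MvPolynomial (Fin 3) ℂ) := Ideal.span {X 0 * X 1 - X 2 ^ (n + 1)} with hI
  set g : MvPolynomial (Fin 3) ℂ := ∑ d ∈ f.support, monomial (red3 n d) (coeff d f) with hg
  have hfg : f - g ∈ I := by
    have hrepr : f - g = ∑ d ∈ f.support,
        (monomial d (coeff d f) - monomial (red3 n d) (coeff d f)) := by
      rw [Finset.sum_sub_distrib, ← hg]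
      congr 1
      exact f.as_sum
    rw [hrepr]
    exact Submodule.sum_mem I fun d _ => monomial_sub_red_mem n d (coeff d f) I hI
  have hIker : ∀ q ∈ I, MvPolynomial.aeval (Gv n) q = 0 := by
    intro q hq
    rw [hI] at hq
    obtain ⟨r, rfl⟩ := Ideal.mem_span_singleton'.mp hq
    rw [map_mul, mul_eq_zero]
    right
    · rw [map_sub, map_mul, map_pow, aeval_X, aeval_X, aeval_X]
      have h0 : Gv n 0 = monomial (Dfun n 1 0 0) 1 := g0_eq n
      have h1 : Gv n 1 = monomial (Dfun n 0 1 0) 1 := g1_eq n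
      have h2 : Gv n 2 = monomial (Dfun n 0 0 1) 1 := g2_eq n
      rw [h0, h1, h2, monomial_mul, monomial_pow, one_mul, one_pow, sub_eq_zero]
      refine congrArg (fun s => (monomial s (1:ℂ))) ?_
      ext v
      have hv := v.isLt
      simp only [Finsupp.add_apply, Finsupp.smul_apply, Dfun_apply, smul_eq_mul]
      omega
  have hgker : MvPolynomial.aeval (Gv n) g = 0 := by
    have := hIker _ hfg
    rw [map_sub, hf, zero_sub, neg_eq_zero] at this
    exact this
  have hgsupp : ∀ e ∈ g.support, e 0 = 0 ∨ e 1 = 0 := by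
    intro e he
    rw [hg] at he
    have := MvPolynomial.support_sum he
    rw [Finset.mem_biUnion] at this
    obtain ⟨d, _, hd⟩ := this
    have hco := MvPolynomial.mem_support_iff.mp hd
    rw [MvPolynomial.coeff_monomial] at hco
    by_cases hse : red3 n d = e
    · subst hse; exact red3_reduced n d
    · rw [if_neg hse] at hco; exact absurd rfl hco
  have hg0 : g = 0 := by
    by_contra hne
    obtain ⟨d₀, hd₀⟩ := (MvPolynomial.support_nonempty.mpr hne)
    have hco : coeff (Dfun n (d₀ 0) (d₀ 1) (d₀ 2)) (MvPolynomial.aeval (Gv n) g)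
        = coeff d₀ g := by
      conv_lhs => rw [g.as_sum, map_sum]
      rw [Finset.sum_congr rfl (fun e _ => by rw [aeval_Gv_monomial])]
      rw [MvPolynomial.coeff_sum]
      rw [Finset.sum_congr rfl (fun e _ => MvPolynomial.coeff_monomial _ _ _)]
      rw [Finset.sum_eq_single_of_mem d₀ hd₀ ?_]
      · rw [if_pos rfl]
      · intro e he hne
        rw [if_neg]
        intro hEe
        exact hne (Finsupp.ext fun i => by
          fin_cases i
          · exact (Dfun_inj n _ _ _ _ _ _ (hgsupp e he) (hgsupp d₀ hd₀) hEe).1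
          · exact (Dfun_inj n _ _ _ _ _ _ (hgsupp e he) (hgsupp d₀ hd₀) hEe).2.1
          · exact (Dfun_inj n _ _ _ _ _ _ (hgsupp e he) (hgsupp d₀ hd₀) hEe).2.2)
    rw [hgker, MvPolynomial.coeff_zero] at hco
    exact (MvPolynomial.mem_support_iff.mp hd₀) hco.symm
  have hfinal := hfg
  rw [hg0, sub_zero] at hfinal
  exact hfinal

lemma mem_invariants {m k : ℕ} (w : Fin m → Fin k → ℤ) (p : MvPolynomial (Fin m) ℂ) :
    p ∈ invariants w ↔ ∀ d ∈ p.support, ∀ i : Fin k, ∑ v, (d v : ℤ) * w v i = 0 :=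
  Iff.rfl

lemma rel0 (n : ℕ) :
    MvPolynomial.aeval (Gv n) ((X 0 * X 1 - X 2 ^ (n + 1) : MvPolynomial (Fin 3) ℂ)) = 0 := by
  rw [map_sub, map_mul, map_pow, aeval_X, aeval_X, aeval_X]
  have h0 : Gv n 0 = monomial (Dfun n 1 0 0) 1 := g0_eq n
  have h1 : Gv n 1 = monomial (Dfun n 0 1 0) 1 := g1_eq n
  have h2 : Gv n 2 = monomial (Dfun n 0 0 1) 1 := g2_eq n
  rw [h0, h1, h2, monomial_mul, monomial_pow, one_mul, one_pow, sub_eq_zero]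
  refine congrArg (fun s => (monomial s (1:ℂ))) ?_
  ext v
  have hv := v.isLt
  simp only [Finsupp.add_apply, Finsupp.smul_apply, Dfun_apply, smul_eq_mul]
  omega

lemma range_eq (n : ℕ) (hn : 1 ≤ n) :
    AlgHom.range (MvPolynomial.aeval (Gv n) :
        MvPolynomial (Fin 3) ℂ →ₐ[ℂ] MvPolynomial (Fin (n + 2)) ℂ)
      = invariants (wA n) := by
  apply le_antisymm
  · rintro x ⟨f, rfl⟩
    show MvPolynomial.aeval (Gv n) f ∈ invariants (wA n)
    have hsum : (MvPolynomial.aeval (Gv n)) f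
        = ∑ d ∈ f.support, monomial (Dfun n (d 0) (d 1) (d 2)) (coeff d f) := by
      conv_lhs => rw [f.as_sum]
      rw [map_sum]
      exact Finset.sum_congr rfl fun d _ => aeval_Gv_monomial n d (coeff d f)
    rw [hsum]
    refine Subalgebra.sum_mem _ fun d _ => ?_
    rw [mem_invariants]
    intro e he i
    have hco := MvPolynomial.mem_support_iff.mp he
    rw [MvPolynomial.coeff_monomial] at hco
    by_cases hse : Dfun n (d 0) (d 1) (d 2) = e
    · subst hse; exact Dfun_weight n _ _ _ i
    · rw [if_neg hse] at hco; exact absurd rfl hco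
  · intro p hp
    rw [mem_invariants] at hp
    rw [p.as_sum]
    refine Subalgebra.sum_mem _ fun d hd => ?_
    obtain ⟨a, b, c, hd'⟩ := classify n hn d (fun i => hp d hd i)
    refine ⟨monomial (Finsupp.equivFunOnFinite.symm ![a,b,c]) (coeff d p), ?_⟩
    show MvPolynomial.aeval (Gv n) (monomial (Finsupp.equivFunOnFinite.symm ![a,b,c]) (coeff d p))
      = monomial d (coeff d p)
    rw [aeval_Gv_monomial, hd']
    rfl

/-- the kernel of `φ : ℂ[Z₁,Z₂,W] → ℂ[x₁,y₁,…,y_n,x_n]`,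
`Z₁ ↦ x_n^{n+1} ∏ y_j^j`, `Z₂ ↦ x₁^{n+1} ∏ y_j^{n+1-j}`, `W ↦ x₁ x_n ∏ y_j`, is the
principal ideal `(Z₁Z₂ - W^{n+1})`; consequently the invariant ring of the torus
action is isomorphic to `ℂ[Z₁,Z₂,W]/(Z₁Z₂ - W^{n+1})`, the coordinate ring of the
`A_n` singularity `{xy = z^{n+1}}`. -/
theorem statement1 (n : ℕ) (hn : 1 ≤ n) :
    RingHom.ker
        (MvPolynomial.aeval
          ![vA n (n + 1) ^ (n + 1) * ∏ j ∈ Finset.Icc 1 n, vA n j ^ j,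
            vA n 0 ^ (n + 1) * ∏ j ∈ Finset.Icc 1 n, vA n j ^ (n + 1 - j),
            vA n 0 * vA n (n + 1) * ∏ j ∈ Finset.Icc 1 n, vA n j] :
          MvPolynomial (Fin 3) ℂ →ₐ[ℂ] MvPolynomial (Fin (n + 2)) ℂ)
      = (Ideal.span {MvPolynomial.X 0 * MvPolynomial.X 1 - MvPolynomial.X 2 ^ (n + 1)} :
          Ideal (MvPolynomial (Fin 3) ℂ)) ∧
    Nonempty
      ((MvPolynomial (Fin 3) ℂ ⧸
          (Ideal.span {MvPolynomial.X 0 * MvPolynomial.X 1 - MvPolynomial.X 2 ^ (n + 1)} :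
            Ideal (MvPolynomial (Fin 3) ℂ)))
        ≃ₐ[ℂ] invariants (wA n)) := by
  have hGv : (![vA n (n + 1) ^ (n + 1) * ∏ j ∈ Finset.Icc 1 n, vA n j ^ j,
      vA n 0 ^ (n + 1) * ∏ j ∈ Finset.Icc 1 n, vA n j ^ (n + 1 - j),
      vA n 0 * vA n (n + 1) * ∏ j ∈ Finset.Icc 1 n, vA n j] :
      Fin 3 → MvPolynomial (Fin (n+2)) ℂ) = Gv n := rfl
  rw [hGv]
  have hker : RingHom.ker (MvPolynomial.aeval (Gv n) :
        MvPolynomial (Fin 3) ℂ →ₐ[ℂ] MvPolynomial (Fin (n + 2)) ℂ)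
      = Ideal.span {MvPolynomial.X 0 * MvPolynomial.X 1 - MvPolynomial.X 2 ^ (n + 1)} := by
    apply le_antisymm
    · intro f hf
      exact ker_le_span n hn f (RingHom.mem_ker.mp hf)
    · rw [Ideal.span_le]
      intro q hq
      rw [Set.mem_singleton_iff] at hq
      subst hq
      exact RingHom.mem_ker.mpr (rel0 n)
  refine ⟨hker, ⟨?_⟩⟩
  refine (Ideal.quotientEquivAlgOfEq ℂ ?_).trans
    ((Ideal.quotientKerAlgEquivOfSurjective
      (AlgHom.rangeRestrict_surjective (MvPolynomial.aeval (Gv n)))).trans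
      (Subalgebra.equivOfEq _ _ (range_eq n hn)))
  rw [AlgHom.ker_rangeRestrict, hker]
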